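/- If A ⊣ B via bounded intertwining T, then B* ⊣ A* via T*, and consequently σ_r(B) ⊆ σ_r(A). -/

import Mathlib

open scoped InnerProductSpace

variable {H : Type*} [NormedAddCommGroup H] [InnerProductSpace ℂ H]

/-- The residual spectrum: `λ` such that `A - λI` is injective but does not have
dense range. -/
def residualSpectrum (A : H →ₗ.[ℂ] H) : Set ℂ :=
  {l | (∀ ξ : A.domain, A ξ = l • (ξ : H) → (ξ : H) = 0) ∧
       ¬ Dense (Set.range fun ξ : A.domain => A ξ - l • (ξ : H))}

/-- If `A ⊣ B` via a bounded intertwining operator `T` (injective, with dense range),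
then `B* ⊣ A*` via `T*`, and consequently `σ_r(B) ⊆ σ_r(A)`. -/
theorem adjoint_quasiSimilar_and_residual {H K : Type*}
    [NormedAddCommGroup H] [InnerProductSpace ℂ H] [CompleteSpace H]
    [NormedAddCommGroup K] [InnerProductSpace ℂ K] [CompleteSpace K]
    (A : H →ₗ.[ℂ] H) (B : K →ₗ.[ℂ] K)
    (hAdense : Dense (A.domain : Set H)) (hBdense : Dense (B.domain : Set K))
    (hAclosed : A.IsClosed) (hBclosed : B.IsClosed)
    (T : H →L[ℂ] K)
    (hTinj : Function.Injective T) (hTrange : DenseRange T)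
    (hmap : ∀ ξ : A.domain, T (ξ : H) ∈ B.domain)
    (hint : ∀ ξ : A.domain, B ⟨T (ξ : H), hmap ξ⟩ = T (A ξ)) :
    (Function.Injective (ContinuousLinearMap.adjoint T)) ∧
    (DenseRange (ContinuousLinearMap.adjoint T)) ∧
    (∀ η : B.adjoint.domain,
      ∃ h : (ContinuousLinearMap.adjoint T) (η : K) ∈ A.adjoint.domain,
        A.adjoint ⟨(ContinuousLinearMap.adjoint T) (η : K), h⟩
          = (ContinuousLinearMap.adjoint T) (B.adjoint η)) ∧
    residualSpectrum B ⊆ residualSpectrum A := by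
  set S := ContinuousLinearMap.adjoint T with hS
  have hSinner : ∀ (η : K) (x : H), ⟪S η, x⟫_ℂ = ⟪η, T x⟫_ℂ := fun η x =>
    ContinuousLinearMap.adjoint_inner_left T x η
  -- dense range of T as a submodule
  have hrangeT : Dense ((LinearMap.range (T : H →ₗ[ℂ] K) : Submodule ℂ K) : Set K) := by
    rw [LinearMap.coe_range]; exact hTrange
  -- S is injective
  have hSker : ∀ η : K, S η = 0 → η = 0 := by
    intro η hη
    refine hrangeT.eq_zero_of_inner_left ℂ fun v hv => ?_
    obtain ⟨x, hx⟩ := hv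
    rw [show ((v : K)) = T x from hx.symm, ← hSinner, hη, inner_zero_left]
  have hSinj : Function.Injective S := by
    intro a b hab
    have h0 : S (a - b) = 0 := by rw [map_sub, hab, sub_self]
    exact sub_eq_zero.mp (hSker _ h0)
  -- S has dense range
  have hSrange : DenseRange S := by
    have : Dense ((LinearMap.range (S : K →ₗ[ℂ] H)) : Set H) := by
      rw [Submodule.dense_iff_topologicalClosure_eq_top,
        Submodule.topologicalClosure_eq_top_iff]
      rw [Submodule.eq_bot_iff]
      intro x hx
      have hTx : T x = 0 := by
        have := hx (S (T x)) ⟨T x, rfl⟩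
        rw [hSinner] at this
        exact inner_self_eq_zero.mp this
      exact hTinj (by rw [hTx, map_zero])
    rwa [LinearMap.coe_range] at this
  refine ⟨hSinj, hSrange, ?_, ?_⟩
  · -- intertwining of adjoints
    intro η
    have key : ∀ ξ : A.domain, ⟪S (B.adjoint η), (ξ : H)⟫_ℂ = ⟪S (η : K), A ξ⟫_ℂ := by
      intro ξ
      rw [hSinner, hSinner]
      have h1 : ⟪B.adjoint η, T (ξ : H)⟫_ℂ = ⟪(η : K), B ⟨T (ξ : H), hmap ξ⟩⟫_ℂ :=
        (LinearPMap.adjoint_isFormalAdjoint hBdense) η ⟨T (ξ : H), hmap ξ⟩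
      rw [h1, hint ξ]
    have hmem : S (η : K) ∈ A.adjoint.domain :=
      LinearPMap.mem_adjoint_domain_of_exists _ ⟨S (B.adjoint η), key⟩
    exact ⟨hmem, LinearPMap.adjoint_apply_eq hAdense ⟨S (η : K), hmem⟩ key⟩
  · -- residual spectrum inclusion
    intro l hl
    obtain ⟨hlinj, hlrange⟩ := hl
    constructor
    · intro ξ hξ
      have hBT : B ⟨T (ξ : H), hmap ξ⟩ = l • ((⟨T (ξ : H), hmap ξ⟩ : B.domain) : K) := by
        rw [hint ξ, hξ, map_smul]
      have := hlinj ⟨T (ξ : H), hmap ξ⟩ hBT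
      exact hTinj (by simpa using this)
    · intro hdense
      apply hlrange
      have himg := hTrange.dense_image T.continuous hdense
      refine himg.mono ?_
      rintro _ ⟨_, ⟨ξ, rfl⟩, rfl⟩
      refine ⟨⟨T (ξ : H), hmap ξ⟩, ?_⟩
      simp only [hint ξ, map_sub, map_smul]
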